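/- Let m, n, k be integers with m, n ≥ k ≥ 3, and let A be a 12⋯k-avoiding m×n (0,1)-matrix whose number of 1's is strictly less than (k−1)(m + n − (k−1)). Then there exists a position (i,j) with A(i,j) = 0 such that the matrix obtained from A by changing the entry in position (i,j) to 1 is still 12⋯k-avoiding. -/
import Mathlib

/-- Number of 1's of an `m × n` (0,1)-matrix `A` (1-indexed entries). -/
def onesCount (m n : ℕ) (A : ℕ → ℕ → Bool) : ℕ :=
  (((Finset.Icc 1 m) ×ˢ (Finset.Icc 1 n)).filter fun p => A p.1 p.2 = true).card

/-- `A` is `12⋯k`-avoiding. -/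
def AvoidId (m n k : ℕ) (A : ℕ → ℕ → Bool) : Prop :=
  ¬ ∃ r c : ℕ → ℕ,
    (∀ t, t + 1 < k → r t < r (t + 1) ∧ c t < c (t + 1)) ∧
    (∀ t, t < k → 1 ≤ r t ∧ r t ≤ m ∧ 1 ≤ c t ∧ c t ≤ n) ∧
    (∀ t, t < k → A (r t) (c t) = true)

/-- The matrix obtained from `A` by changing the entry in position `(i, j)` to `1`. -/
def setOne (A : ℕ → ℕ → Bool) (i j : ℕ) : ℕ → ℕ → Bool :=
  fun i' j' => if i' = i ∧ j' = j then true else A i' j'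

def ChainNW (A : ℕ → ℕ → Bool) (a i j : ℕ) : Prop :=
  ∃ r c : ℕ → ℕ,
    (∀ t, t + 1 < a → r t < r (t + 1) ∧ c t < c (t + 1)) ∧
    (∀ t, t < a → 1 ≤ r t ∧ r t ≤ i ∧ 1 ≤ c t ∧ c t ≤ j) ∧
    (∀ t, t < a → A (r t) (c t) = true)

def ChainSE (m n : ℕ) (A : ℕ → ℕ → Bool) (b i j : ℕ) : Prop :=
  ∃ r c : ℕ → ℕ,
    (∀ t, t + 1 < b → r t < r (t + 1) ∧ c t < c (t + 1)) ∧
    (∀ t, t < b → i ≤ r t ∧ r t ≤ m ∧ j ≤ c t ∧ c t ≤ n) ∧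
    (∀ t, t < b → A (r t) (c t) = true)

lemma stepsStrict {r : ℕ → ℕ} {a : ℕ} (h : ∀ t, t + 1 < a → r t < r (t + 1))
    {s t : ℕ} (hst : s < t) (ht : t < a) : r s < r t := by
  induction t with
  | zero => omega
  | succ u ih =>
    have hu : r u < r (u + 1) := h u ht
    rcases Nat.lt_succ_iff_lt_or_eq.mp hst with h' | h'
    · exact lt_trans (ih h' (by omega)) hu
    · subst h'; exact hu

lemma chainNW_zero (A : ℕ → ℕ → Bool) (i j : ℕ) : ChainNW A 0 i j :=
  ⟨fun _ => 1, fun _ => 1, fun t ht => by omega, fun t ht => by omega, fun t ht => by omega⟩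

lemma chainNW_mono_len {A a i j} (h : ChainNW A a i j) {a' : ℕ} (hle : a' ≤ a) :
    ChainNW A a' i j := by
  obtain ⟨r, c, h1, h2, h3⟩ := h
  exact ⟨r, c, fun t ht => h1 t (by omega), fun t ht => h2 t (by omega),
    fun t ht => h3 t (by omega)⟩

lemma chainNW_mono_region {A a i j i' j'} (hi : i ≤ i') (hj : j ≤ j')
    (h : ChainNW A a i j) : ChainNW A a i' j' := by
  obtain ⟨r, c, h1, h2, h3⟩ := h
  refine ⟨r, c, h1, fun t ht => ?_, h3⟩
  have := h2 t ht; omega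

lemma chainSE_mono_region {m n A b i j i' j'} (hi : i' ≤ i) (hj : j' ≤ j)
    (h : ChainSE m n A b i j) : ChainSE m n A b i' j' := by
  obtain ⟨r, c, h1, h2, h3⟩ := h
  refine ⟨r, c, h1, fun t ht => ?_, h3⟩
  have := h2 t ht; omega

lemma chainNW_bound {A a i j} (h : ChainNW A a i j) : a ≤ i ∧ a ≤ j := by
  obtain ⟨r, c, h1, h2, h3⟩ := h
  rcases Nat.eq_zero_or_pos a with ha | ha
  · omega
  have key : ∀ t, t < a → t + 1 ≤ r t ∧ t + 1 ≤ c t := by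
    intro t
    induction t with
    | zero => intro h0; have := h2 0 h0; omega
    | succ u ih =>
      intro hu
      have h1' := h1 u hu
      have := ih (by omega)
      omega
  have h2' := h2 (a - 1) (by omega)
  have := key (a - 1) (by omega)
  omega

lemma chainSE_bound {m n A b i j} (h : ChainSE m n A b i j) (hb : 1 ≤ b) :
    i + b ≤ m + 1 ∧ j + b ≤ n + 1 := by
  obtain ⟨r, c, h1, h2, h3⟩ := h
  have key : ∀ t, t < b → i + t ≤ r t ∧ j + t ≤ c t := by
    intro t
    induction t with
    | zero => intro h0; have := h2 0 h0; omega
    | succ u ih =>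
      intro hu
      have h1' := h1 u hu
      have := ih (by omega)
      omega
  have h2' := h2 (b - 1) (by omega)
  have := key (b - 1) (by omega)
  omega

lemma chainNW_prefix {A a i j} (h : ChainNW A (a + 1) i j) :
    ChainNW A a (i - 1) (j - 1) := by
  obtain ⟨r, c, h1, h2, h3⟩ := h
  refine ⟨r, c, fun t ht => h1 t (by omega), fun t ht => ?_, fun t ht => h3 t (by omega)⟩
  have hb := h2 t (by omega)
  have ha := h2 a (by omega)
  have hr : r t < r a := stepsStrict (a := a + 1) (fun s hs => (h1 s hs).1) ht (by omega)
  have hc : c t < c a :=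
    stepsStrict (a := a + 1) (fun s hs => (h1 s hs).2) ht (by omega)
  omega

lemma chainSE_head {m n A b i j} (h : ChainSE m n A (b + 1) i j) :
    ∃ r0 c0, i ≤ r0 ∧ r0 ≤ m ∧ j ≤ c0 ∧ c0 ≤ n ∧ A r0 c0 = true ∧
      ChainSE m n A b (r0 + 1) (c0 + 1) := by
  obtain ⟨r, c, h1, h2, h3⟩ := h
  have h20 := h2 0 (by omega)
  refine ⟨r 0, c 0, h20.1, h20.2.1, h20.2.2.1, h20.2.2.2, h3 0 (by omega), ?_⟩
  refine ⟨fun t => r (t + 1), fun t => c (t + 1), fun t ht => h1 (t + 1) (by omega),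
    fun t ht => ?_, fun t ht => h3 (t + 1) (by omega)⟩
  dsimp only
  have hb := h2 (t + 1) (by omega)
  have hr : r 0 < r (t + 1) := stepsStrict (a := b + 1) (fun s hs => (h1 s hs).1) (by omega) (by omega)
  have hc : c 0 < c (t + 1) :=
    stepsStrict (a := b + 1) (fun s hs => (h1 s hs).2) (Nat.succ_pos t) (by omega)
  omega

lemma appendOne {A : ℕ → ℕ → Bool} {a x y r0 c0 : ℕ}
    (h1 : ChainNW A a x y) (hx : x < r0) (hy : y < c0)
    (hr0 : 1 ≤ r0) (hc0 : 1 ≤ c0) (h0 : A r0 c0 = true) :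
    ChainNW A (a + 1) r0 c0 := by
  obtain ⟨r, c, p1, p2, p3⟩ := h1
  refine ⟨fun t => if t < a then r t else r0, fun t => if t < a then c t else c0,
    fun t ht => ?_, fun t ht => ?_, fun t ht => ?_⟩ <;> dsimp only
  case _ =>
    have ht' : t < a := by omega
    by_cases h2 : t + 1 < a
    · simp only [if_pos ht', if_pos h2]; exact p1 t h2
    · simp only [if_pos ht', if_neg h2]
      have := p2 t ht'
      constructor <;> omega
  case _ =>
    by_cases ht' : t < a
    · simp only [if_pos ht']; have := p2 t ht'; omega
    · simp only [if_neg ht']; omega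
  case _ =>
    by_cases ht' : t < a
    · simp only [if_pos ht']; exact p3 t ht'
    · simp only [if_neg ht']; exact h0

lemma glue' {m n : ℕ} {A : ℕ → ℕ → Bool} :
    ∀ b a x y, ChainNW A a x y → x ≤ m → y ≤ n →
      ChainSE m n A b (x + 1) (y + 1) → ChainNW A (a + b) m n := by
  intro b
  induction b with
  | zero => intro a x y h hx hy _; exact chainNW_mono_region hx hy h
  | succ b ih =>
    intro a x y h hx hy hse
    obtain ⟨r0, c0, q1, q2, q3, q4, q5, q6⟩ := chainSE_head hse
    have h' : ChainNW A (a + 1) r0 c0 :=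
      appendOne h (by omega) (by omega) (by omega) (by omega) q5
    have := ih (a + 1) r0 c0 h' q2 q4 q6
    have heq : a + 1 + b = a + (b + 1) := by omega
    rwa [heq] at this

lemma glue {m n : ℕ} {A : ℕ → ℕ → Bool} {a b i' j' r0 c0 : ℕ}
    (h1 : ChainNW A a i' j') (hi' : i' < r0) (hj' : j' < c0)
    (hr0 : 1 ≤ r0) (hr0m : r0 ≤ m) (hc0 : 1 ≤ c0) (hc0n : c0 ≤ n)
    (h0 : A r0 c0 = true) (h2 : ChainSE m n A b (r0 + 1) (c0 + 1)) :
    ChainNW A (a + 1 + b) m n := by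
  have h' : ChainNW A (a + 1) r0 c0 := appendOne h1 hi' hj' hr0 hc0 h0
  exact glue' b (a + 1) r0 c0 h' hr0m hc0n h2

open scoped Classical in
/-- longest chain of ones strictly north-west of `(i,j)` (capped search at `k`). -/
noncomputable def phiF (k : ℕ) (A : ℕ → ℕ → Bool) (i j : ℕ) : ℕ :=
  Nat.findGreatest (fun a => ChainNW A a (i - 1) (j - 1)) k

open scoped Classical in
lemma phiF_spec (k : ℕ) (A : ℕ → ℕ → Bool) (i j : ℕ) :
    ChainNW A (phiF k A i j) (i - 1) (j - 1) :=
  Nat.findGreatest_spec (P := fun a => ChainNW A a (i - 1) (j - 1)) (Nat.zero_le k)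
    (chainNW_zero A _ _)

open scoped Classical in
lemma le_phiF {k a : ℕ} {A : ℕ → ℕ → Bool} {i j : ℕ} (hak : a ≤ k)
    (h : ChainNW A a (i - 1) (j - 1)) : a ≤ phiF k A i j :=
  Nat.le_findGreatest hak h

lemma avoid_chainNW {m n k : ℕ} {A : ℕ → ℕ → Bool} (hA : AvoidId m n k A)
    {a : ℕ} (h : ChainNW A a m n) : a ≤ k - 1 := by
  by_contra hc
  have hka : k ≤ a := by
    rcases Nat.eq_zero_or_pos k with h0 | h0 <;> omega
  exact hA (chainNW_mono_len h hka)

/-- consequence of saturation at an in-range zero entry -/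
def SatAt (m n k : ℕ) (A : ℕ → ℕ → Bool) (i j : ℕ) : Prop :=
  ∃ a b, a + b + 1 = k ∧ ChainNW A a (i - 1) (j - 1) ∧ ChainSE m n A b (i + 1) (j + 1)

def Sat (m n k : ℕ) (A : ℕ → ℕ → Bool) : Prop :=
  ∀ i j, 1 ≤ i → i ≤ m → 1 ≤ j → j ≤ n → A i j = false → SatAt m n k A i j

lemma sat_split {m n k : ℕ} {A : ℕ → ℕ → Bool} (hA : AvoidId m n k A)
    {i j : ℕ} (hi1 : 1 ≤ i) (him : i ≤ m) (hj1 : 1 ≤ j) (hjn : j ≤ n)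
    (h0 : A i j = false) (hns : ¬ AvoidId m n k (setOne A i j)) :
    SatAt m n k A i j := by
  rw [AvoidId, not_not] at hns
  obtain ⟨r, c, h1, h2, h3⟩ := hns
  by_cases hth : ∃ t0, t0 < k ∧ r t0 = i ∧ c t0 = j
  · obtain ⟨t0, ht0, hri, hcj⟩ := hth
    refine ⟨t0, k - 1 - t0, by omega, ?_, ?_⟩
    · refine ⟨r, c, fun t ht => h1 t (by omega), fun t ht => ?_, fun t ht => ?_⟩
      · have hb := h2 t (by omega)
        have hr : r t < r t0 := stepsStrict (a := k) (fun s hs => (h1 s hs).1) ht (by omega)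
        have hc : c t < c t0 := stepsStrict (a := k) (fun s hs => (h1 s hs).2) ht (by omega)
        omega
      · have hr : r t < r t0 := stepsStrict (a := k) (fun s hs => (h1 s hs).1) ht (by omega)
        have h3' := h3 t (by omega)
        rw [setOne] at h3'
        simpa [show ¬ (r t = i ∧ c t = j) by omega] using h3'
    · refine ⟨fun s => r (t0 + 1 + s), fun s => c (t0 + 1 + s),
        fun s hs => ?_, fun s hs => ?_, fun s hs => ?_⟩ <;> dsimp only
      · have := h1 (t0 + 1 + s) (by omega)
        constructor
        · have h' := (this).1
          have : t0 + 1 + s + 1 = t0 + 1 + (s + 1) := by omega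
          rw [this] at h'; exact h'
        · have h' := (this).2
          have : t0 + 1 + s + 1 = t0 + 1 + (s + 1) := by omega
          rw [this] at h'; exact h'
      · have hb := h2 (t0 + 1 + s) (by omega)
        have hr : r t0 < r (t0 + 1 + s) :=
          stepsStrict (a := k) (fun s hs => (h1 s hs).1) (by omega) (by omega)
        have hc : c t0 < c (t0 + 1 + s) :=
          stepsStrict (a := k) (fun s hs => (h1 s hs).2) (by omega) (by omega)
        omega
      · have hr : r t0 < r (t0 + 1 + s) :=
          stepsStrict (a := k) (fun s hs => (h1 s hs).1) (by omega) (by omega)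
        have h3' := h3 (t0 + 1 + s) (by omega)
        rw [setOne] at h3'
        simpa [show ¬ (r (t0 + 1 + s) = i ∧ c (t0 + 1 + s) = j) by omega] using h3'
  · exfalso
    push_neg at hth
    apply hA
    refine ⟨r, c, h1, h2, fun t ht => ?_⟩
    have h3' := h3 t ht
    rw [setOne] at h3'
    by_cases he : r t = i ∧ c t = j
    · exact absurd he.2 (hth t ht he.1)
    · simpa [he] using h3'

section Forced

variable {m n k : ℕ} {A : ℕ → ℕ → Bool}

lemma forced1 (hk : 3 ≤ k) (hm : k ≤ m) (hn : k ≤ n) (hS : Sat m n k A)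
    {c : ℕ} (hc1 : 1 ≤ c) (hc2 : c ≤ k - 2) : A (m - (k - 1) + c) c = true := by
  by_contra h
  rw [Bool.not_eq_true] at h
  obtain ⟨a, b, hab, hNW, hSE⟩ :=
    hS (m - (k - 1) + c) c (by omega) (by omega) hc1 (by omega) h
  have hNWb := chainNW_bound hNW
  rcases Nat.eq_zero_or_pos b with hb | hb
  · omega
  · have hSEb := chainSE_bound hSE hb
    omega

lemma forced2 (hk : 3 ≤ k) (hm : k ≤ m) (hn : k ≤ n) (hS : Sat m n k A)
    {c : ℕ} (hc1 : 1 ≤ c) (hc2 : c ≤ k - 2) : A c (n - (k - 1) + c) = true := by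
  by_contra h
  rw [Bool.not_eq_true] at h
  obtain ⟨a, b, hab, hNW, hSE⟩ :=
    hS c (n - (k - 1) + c) hc1 (by omega) (by omega) (by omega) h
  have hNWb := chainNW_bound hNW
  rcases Nat.eq_zero_or_pos b with hb | hb
  · omega
  · have hSEb := chainSE_bound hSE hb
    omega

lemma chain_bottom (hk : 3 ≤ k) (hm : k ≤ m) (hn : k ≤ n) (hS : Sat m n k A)
    {t : ℕ} (ht : t ≤ k - 2) : ChainNW A t (m - 1) t := by
  refine ⟨fun u => m - (k - 1) + (u + 1), fun u => u + 1,
    fun u hu => by dsimp only; omega, fun u hu => by dsimp only; omega,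
    fun u hu => by dsimp only; exact forced1 hk hm hn hS (by omega) (by omega)⟩

lemma chain_right (hk : 3 ≤ k) (hm : k ≤ m) (hn : k ≤ n) (hS : Sat m n k A)
    {t : ℕ} (ht : t ≤ k - 2) : ChainNW A t t (n - 1) := by
  refine ⟨fun u => u + 1, fun u => n - (k - 1) + (u + 1),
    fun u hu => by dsimp only; omega, fun u hu => by dsimp only; omega,
    fun u hu => by dsimp only; exact forced2 hk hm hn hS (by omega) (by omega)⟩

lemma diag_boundary (hk : 3 ≤ k) (hm : k ≤ m) (hn : k ≤ n) (hS : Sat m n k A)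
    {t : ℕ} (ht : t ≤ k - 2) {i j : ℕ} (hi1 : 1 ≤ i) (him : i ≤ m) (hj1 : 1 ≤ j)
    (hjn : j ≤ n) (hb : i = m ∨ j = n) (inv1 : i + t + 1 ≤ j + m)
    (inv2 : j + t + 1 ≤ i + n) (hphi : phiF k A i j ≤ t) :
    A i j = true ∧ phiF k A i j = t := by
  have hge : ChainNW A t (i - 1) (j - 1) := by
    rcases hb with hb | hb
    · subst hb
      exact chainNW_mono_region (by omega) (by omega) (chain_bottom hk hm hn hS ht)
    · subst hb
      exact chainNW_mono_region (by omega) (by omega) (chain_right hk hm hn hS ht)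
  have hphieq : phiF k A i j = t := le_antisymm hphi (le_phiF (by omega) hge)
  refine ⟨?_, hphieq⟩
  by_contra h
  rw [Bool.not_eq_true] at h
  obtain ⟨a, b, hab, hNW, hSE⟩ := hS i j hi1 him hj1 hjn h
  rcases Nat.eq_zero_or_pos b with hb0 | hb0
  · have : a ≤ phiF k A i j := le_phiF (by omega) hNW
    omega
  · have hSEb := chainSE_bound hSE hb0
    omega

lemma diag_core (hA : AvoidId m n k A) (hk : 3 ≤ k) (hS : Sat m n k A)
    {t : ℕ} (ht : t ≤ k - 2) {i j : ℕ} (hi1 : 1 ≤ i) (him : i + 1 ≤ m)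
    (hj1 : 1 ≤ j) (hjn : j + 1 ≤ n) (hphi : phiF k A i j ≤ t)
    (hnext : t + 1 ≤ phiF k A (i + 1) (j + 1)) :
    A i j = true ∧ phiF k A i j = t := by
  have hspec := phiF_spec k A (i + 1) (j + 1)
  simp only [Nat.add_sub_cancel] at hspec
  have hc1 : ChainNW A (t + 1) i j := chainNW_mono_len hspec hnext
  have hpre : ChainNW A t (i - 1) (j - 1) := chainNW_prefix hc1
  have hphieq : phiF k A i j = t := le_antisymm hphi (le_phiF (by omega) hpre)
  refine ⟨?_, hphieq⟩
  by_contra h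
  rw [Bool.not_eq_true] at h
  obtain ⟨a, b, hab, hNW, hSE⟩ := hS i j hi1 (by omega) hj1 (by omega) h
  have ha : a ≤ t := by
    have := le_phiF (k := k) (by omega) hNW
    omega
  have hb1 : 1 ≤ b := by omega
  have hSE' : ChainSE m n A ((b - 1) + 1) (i + 1) (j + 1) := by
    have : b - 1 + 1 = b := by omega
    rwa [this]
  obtain ⟨r0, c0, q1, q2, q3, q4, q5, q6⟩ := chainSE_head hSE'
  have hglue : ChainNW A ((t + 1) + 1 + (b - 1)) m n :=
    glue hc1 (by omega) (by omega) (by omega) q2 (by omega) q4 q5 q6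
  exact hA (chainNW_mono_len hglue (by omega))

lemma main_diag (hA : AvoidId m n k A) (hk : 3 ≤ k) (hm : k ≤ m) (hn : k ≤ n)
    (hS : Sat m n k A) {t : ℕ} (ht : t ≤ k - 2) :
    ∀ d i j, 1 ≤ i → i ≤ m → 1 ≤ j → j ≤ n → i + t + 1 ≤ j + m →
      j + t + 1 ≤ i + n → m - i ≤ d → phiF k A i j ≤ t →
      ∃ i' j', 1 ≤ i' ∧ i' ≤ m ∧ 1 ≤ j' ∧ j' ≤ n ∧ i' + j = j' + i ∧
        A i' j' = true ∧ phiF k A i' j' = t := by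
  intro d
  induction d with
  | zero =>
    intro i j hi1 him hj1 hjn inv1 inv2 hd hphi
    have hieq : i = m := by omega
    have := diag_boundary hk hm hn hS ht hi1 him hj1 hjn (Or.inl hieq) inv1 inv2 hphi
    exact ⟨i, j, hi1, him, hj1, hjn, by omega, this.1, this.2⟩
  | succ d ih =>
    intro i j hi1 him hj1 hjn inv1 inv2 hd hphi
    by_cases hb : i = m ∨ j = n
    · have := diag_boundary hk hm hn hS ht hi1 him hj1 hjn hb inv1 inv2 hphi
      exact ⟨i, j, hi1, him, hj1, hjn, by omega, this.1, this.2⟩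
    · push_neg at hb
      have him' : i + 1 ≤ m := by omega
      have hjn' : j + 1 ≤ n := by omega
      by_cases hnext : phiF k A (i + 1) (j + 1) ≤ t
      · obtain ⟨i', j', p1, p2, p3, p4, p5, p6, p7⟩ :=
          ih (i + 1) (j + 1) (by omega) him' (by omega) hjn' (by omega) (by omega)
            (by omega) hnext
        exact ⟨i', j', p1, p2, p3, p4, by omega, p6, p7⟩
      · push_neg at hnext
        have := diag_core hA hk hS ht hi1 him' hj1 hjn' hphi (by omega)
        exact ⟨i, j, hi1, him, hj1, hjn, by omega, this.1, this.2⟩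

end Forced

section Final

variable {m n k : ℕ} {A : ℕ → ℕ → Bool}

lemma exists_cell (hA : AvoidId m n k A) (hk : 3 ≤ k) (hm : k ≤ m) (hn : k ≤ n)
    (hS : Sat m n k A) {t : ℕ} (ht : t ≤ k - 2) {p : ℤ}
    (hlo : 1 + (t : ℤ) - n ≤ p) (hhi : p ≤ (m : ℤ) - t - 1) :
    ∃ q : ℕ × ℕ, (1 ≤ q.1 ∧ q.1 ≤ m ∧ 1 ≤ q.2 ∧ q.2 ≤ n ∧ A q.1 q.2 = true ∧
      phiF k A q.1 q.2 = t) ∧ (q.1 : ℤ) - q.2 = p := by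
  rcases le_or_gt 0 p with hp | hp
  · have hptn : (p.toNat : ℤ) = p := Int.toNat_of_nonneg hp
    set i1 := p.toNat + 1 with hi1def
    have hphi0 : phiF k A i1 1 ≤ t := by
      have := (chainNW_bound (phiF_spec k A i1 1)).2
      omega
    obtain ⟨i', j', p1, p2, p3, p4, p5, p6, p7⟩ :=
      main_diag hA hk hm hn hS ht m i1 1 (by omega) (by omega) (by omega) (by omega)
        (by omega) (by omega) (by omega) hphi0
    exact ⟨(i', j'), ⟨p1, p2, p3, p4, p6, p7⟩, by
      have : i' + 1 = j' + i1 := p5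
      omega⟩
  · have hptn : ((-p).toNat : ℤ) = -p := Int.toNat_of_nonneg (by omega)
    set j1 := (-p).toNat + 1 with hj1def
    have hphi0 : phiF k A 1 j1 ≤ t := by
      have := (chainNW_bound (phiF_spec k A 1 j1)).1
      omega
    obtain ⟨i', j', p1, p2, p3, p4, p5, p6, p7⟩ :=
      main_diag hA hk hm hn hS ht m 1 j1 (by omega) (by omega) (by omega) (by omega)
        (by omega) (by omega) (by omega) hphi0
    exact ⟨(i', j'), ⟨p1, p2, p3, p4, p6, p7⟩, by
      have : i' + j1 = j' + 1 := p5
      omega⟩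

lemma count_t (hA : AvoidId m n k A) (hk : 3 ≤ k) (hm : k ≤ m) (hn : k ≤ n)
    (hS : Sat m n k A) {t : ℕ} (ht : t ≤ k - 2) :
    m + n - 1 - 2 * t ≤ ((((Finset.Icc 1 m) ×ˢ (Finset.Icc 1 n)).filter
      fun q => A q.1 q.2 = true ∧ phiF k A q.1 q.2 = t).card) := by
  classical
  set lo : ℤ := 1 + (t : ℤ) - n with hlo
  set hi : ℤ := (m : ℤ) - t - 1 with hhi
  have H : ∀ p : ℤ, ∃ q : ℕ × ℕ, p ∈ Finset.Icc lo hi →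
      (q ∈ (((Finset.Icc 1 m) ×ˢ (Finset.Icc 1 n)).filter
        fun q => A q.1 q.2 = true ∧ phiF k A q.1 q.2 = t) ∧ (q.1 : ℤ) - q.2 = p) := by
    intro p
    by_cases hp : p ∈ Finset.Icc lo hi
    · rw [Finset.mem_Icc] at hp
      obtain ⟨q, ⟨q1, q2, q3, q4, q5, q6⟩, hq⟩ :=
        exists_cell hA hk hm hn hS ht hp.1 hp.2
      refine ⟨q, fun _ => ⟨Finset.mem_filter.mpr ⟨?_, q5, q6⟩, hq⟩⟩
      rw [Finset.mem_product, Finset.mem_Icc, Finset.mem_Icc]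
      exact ⟨⟨q1, q2⟩, q3, q4⟩
    · exact ⟨(0, 0), fun h => absurd h hp⟩
  choose f hf using H
  have hcard : m + n - 1 - 2 * t = (Finset.Icc lo hi).card := by
    rw [Int.card_Icc]
    omega
  rw [hcard]
  exact Finset.card_le_card_of_injOn f (fun p hp => (hf p hp).1)
    (fun p hp q hq he => by
      have h1 := (hf p hp).2
      have h2 := (hf q hq).2
      rw [he] at h1
      exact h1.symm.trans h2)

lemma sum_arith : ∀ K C : ℕ, 2 * K ≤ C →
    ∑ t ∈ Finset.range K, (C - 1 - 2 * t) = K * (C - K) := by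
  intro K
  induction K with
  | zero => intro C _; simp
  | succ K ih =>
    intro C hC
    rw [Finset.sum_range_succ, ih C (by omega)]
    have h3 : (K + 1) * (C - (K + 1)) = K * (C - (K + 1)) + (C - (K + 1)) :=
      Nat.succ_mul _ _
    have h4 : K * (C - K) = K * (C - (K + 1)) + K := by
      have h5 : C - K = (C - (K + 1)) + 1 := by omega
      rw [h5, Nat.mul_succ]
    rw [h3, h4]
    generalize K * (C - (K + 1)) = X
    omega

lemma total (hA : AvoidId m n k A) (hk : 3 ≤ k) (hm : k ≤ m) (hn : k ≤ n)
    (hS : Sat m n k A) : (k - 1) * (m + n - (k - 1)) ≤ onesCount m n A := by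
  classical
  set B := (((Finset.Icc 1 m) ×ˢ (Finset.Icc 1 n)).filter fun p => A p.1 p.2 = true)
    with hB
  have hsub : ∀ t : ℕ, (((Finset.Icc 1 m) ×ˢ (Finset.Icc 1 n)).filter
      fun q => A q.1 q.2 = true ∧ phiF k A q.1 q.2 = t) ⊆ B := by
    intro t q hq
    rw [Finset.mem_filter] at hq
    exact Finset.mem_filter.mpr ⟨hq.1, hq.2.1⟩
  set S : ℕ → Finset (ℕ × ℕ) := fun t => (((Finset.Icc 1 m) ×ˢ (Finset.Icc 1 n)).filter
      fun q => A q.1 q.2 = true ∧ phiF k A q.1 q.2 = t) with hSdef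
  have hdisj : ∀ t₁ ∈ Finset.range (k - 1), ∀ t₂ ∈ Finset.range (k - 1), t₁ ≠ t₂ →
      Disjoint (S t₁) (S t₂) := by
    intro t₁ _ t₂ _ hne
    rw [Finset.disjoint_left]
    intro q hq1 hq2
    rw [hSdef, Finset.mem_filter] at hq1 hq2
    exact hne (hq1.2.2.symm.trans hq2.2.2)
  have hle : ∑ t ∈ Finset.range (k - 1), (S t).card ≤ B.card := by
    rw [← Finset.card_biUnion hdisj]
    apply Finset.card_le_card
    intro q hq
    rw [Finset.mem_biUnion] at hq
    obtain ⟨t, _, hq⟩ := hq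
    exact hsub t hq
  have hsum : ∑ t ∈ Finset.range (k - 1), (m + n - 1 - 2 * t) ≤
      ∑ t ∈ Finset.range (k - 1), (S t).card := by
    apply Finset.sum_le_sum
    intro t htm
    rw [Finset.mem_range] at htm
    exact count_t hA hk hm hn hS (by omega)
  have harith : ∑ t ∈ Finset.range (k - 1), (m + n - 1 - 2 * t) =
      (k - 1) * (m + n - (k - 1)) := sum_arith (k - 1) (m + n) (by omega)
  calc (k - 1) * (m + n - (k - 1)) = _ := harith.symm
    _ ≤ _ := hsum
    _ ≤ B.card := hle
    _ = onesCount m n A := rfl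

end Final

theorem stmt_8 (m n k : ℕ) (hk : 3 ≤ k) (hm : k ≤ m) (hn : k ≤ n)
    (A : ℕ → ℕ → Bool) (hA : AvoidId m n k A)
    (hcard : onesCount m n A < (k - 1) * (m + n - (k - 1))) :
    ∃ i j : ℕ, 1 ≤ i ∧ i ≤ m ∧ 1 ≤ j ∧ j ≤ n ∧ A i j = false ∧
      AvoidId m n k (setOne A i j) := by
  by_contra hgoal
  push_neg at hgoal
  have hS : Sat m n k A := fun i j h1 h2 h3 h4 h5 =>
    sat_split hA h1 h2 h3 h4 h5 (hgoal i j h1 h2 h3 h4 h5)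
  have := total hA hk hm hn hS
  omega
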